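/- arXiv:2507.10833 — 4 statements merged into one kernel-verified Lean document; each statement's English description precedes it below -/
import Mathlib

section
/- Let x ∈ ℝ^n be a nonzero vector and x* ∈ {−1,1}^n be such that corr(x, x*) ≥ 1 − δ for some δ ∈ (0,1). Then corr(sgn(x), x*) ≥ 1 − 4δ, where sgn(x) ∈ {−1,1}^n is obtained by applying sgn entrywise to x. -/
open Finset

/-- For a nonzero `x : ℝⁿ` and `x* ∈ {−1,1}ⁿ` with `corr(x, x*) ≥ 1 − δ`, `δ ∈ (0,1)`,
we have `corr(sgn(x), x*) ≥ 1 − 4δ`, where `corr(u,v) = ⟨u,v⟩/(‖u‖₂‖v‖₂)` and `sgn`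
is applied entrywise (`sgn z = 1` if `z ≥ 0`, `−1` otherwise). -/
theorem stmt0 (n : ℕ) (x xstar : Fin n → ℝ) (δ : ℝ)
    (hx : x ≠ 0)
    (hxstar : ∀ i, xstar i = 1 ∨ xstar i = -1)
    (hδ : 0 < δ ∧ δ < 1)
    (hcorr : (∑ i, x i * xstar i) /
        (Real.sqrt (∑ i, (x i) ^ 2) * Real.sqrt (∑ i, (xstar i) ^ 2)) ≥ 1 - δ) :
    (∑ i, (if 0 ≤ x i then (1 : ℝ) else -1) * xstar i) /
        (Real.sqrt (∑ i, (if 0 ≤ x i then (1 : ℝ) else -1) ^ 2) *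
          Real.sqrt (∑ i, (xstar i) ^ 2)) ≥ 1 - 4 * δ := by
  have hn : 0 < n := Nat.pos_of_ne_zero (by rintro rfl; exact hx (funext fun i => i.elim0))
  have hnR : (0:ℝ) < n := Nat.cast_pos.mpr hn
  have hSx : 0 < ∑ i, (x i)^2 := by
    obtain ⟨i, hi⟩ := Function.ne_iff.mp hx
    have hi' : x i ≠ 0 := by simpa using hi
    exact Finset.sum_pos' (fun j _ => sq_nonneg _) ⟨i, Finset.mem_univ i, by positivity⟩
  set Sx := ∑ i, (x i)^2 with hSxdef
  set r := Real.sqrt Sx with hrdef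
  have hr : 0 < r := Real.sqrt_pos.mpr hSx
  have hr2 : r^2 = Sx := Real.sq_sqrt hSx.le
  have hsqn : Real.sqrt n ^ 2 = (n:ℝ) := Real.sq_sqrt hnR.le
  have hsqnpos : 0 < Real.sqrt n := Real.sqrt_pos.mpr hnR
  have hstar2 : ∀ i, (xstar i)^2 = 1 := fun i => by rcases hxstar i with h|h <;> rw [h] <;> ring
  have hstarsum : (∑ i, (xstar i)^2) = (n:ℝ) := by simp [hstar2]
  have hsgn2 : (∑ i, (if 0 ≤ x i then (1:ℝ) else -1)^2) = (n:ℝ) := by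
    have h : ∀ i : Fin n, (if 0 ≤ x i then (1:ℝ) else -1)^2 = 1 := fun i => by split <;> ring
    simp [h]
  have hsn : Real.sqrt n * Real.sqrt n = (n:ℝ) := Real.mul_self_sqrt hnR.le
  rw [hstarsum] at hcorr
  have hc : (1 - δ) * (r * Real.sqrt n) ≤ ∑ i, x i * xstar i :=
    (le_div_iff₀ (by positivity)).mp hcorr
  -- pointwise key inequality
  have key : ∀ i, (1 - (if 0 ≤ x i then (1:ℝ) else -1) * xstar i) * Sx
      ≤ 2 * (Real.sqrt n * x i - r * xstar i)^2 := by
    intro i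
    rcases hxstar i with h | h <;> rw [h] <;> split_ifs with hxi
    · nlinarith [sq_nonneg (Real.sqrt n * x i - r * 1)]
    · have hx0 : x i < 0 := lt_of_not_ge hxi
      have h1 : Real.sqrt n * x i ≤ 0 := mul_nonpos_of_nonneg_of_nonpos hsqnpos.le hx0.le
      nlinarith [sq_nonneg (Real.sqrt n * x i), mul_nonneg (neg_nonneg.mpr h1) hr.le]
    · have h1 : 0 ≤ Real.sqrt n * x i := mul_nonneg hsqnpos.le hxi
      nlinarith [sq_nonneg (Real.sqrt n * x i), mul_nonneg h1 hr.le]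
    · nlinarith [sq_nonneg (Real.sqrt n * x i - r * (-1))]
  -- sum expansion
  have hexpi : ∀ i : Fin n, (Real.sqrt n * x i - r * xstar i)^2
      = (n:ℝ) * (x i)^2 - 2*(r*Real.sqrt n)*(x i * xstar i) + Sx * (xstar i)^2 := by
    intro i
    linear_combination (x i)^2 * hsqn + (xstar i)^2 * hr2
  have hexp : ∑ i, (Real.sqrt n * x i - r * xstar i)^2
      = 2*((n:ℝ)*Sx) - 2*(r*Real.sqrt n) * ∑ i, x i * xstar i := by
    simp_rw [hexpi]
    rw [Finset.sum_add_distrib, Finset.sum_sub_distrib, ← Finset.mul_sum, ← Finset.mul_sum,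
      ← Finset.mul_sum, hstarsum, ← hSxdef]
    ring
  have hsum : (∑ i, (1 - (if 0 ≤ x i then (1:ℝ) else -1) * xstar i)) * Sx
      ≤ 2 * ∑ i, (Real.sqrt n * x i - r * xstar i)^2 := by
    rw [Finset.sum_mul, Finset.mul_sum]
    exact Finset.sum_le_sum fun i _ => key i
  have hsumsub : (∑ i, (1 - (if 0 ≤ x i then (1:ℝ) else -1) * xstar i))
      = (n:ℝ) - ∑ i, (if 0 ≤ x i then (1:ℝ) else -1) * xstar i := by
    rw [Finset.sum_sub_distrib]; simp
  have hrn2 : (r * Real.sqrt n)^2 = (n:ℝ) * Sx := by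
    rw [mul_pow, hr2, hsqn]; ring
  -- combine
  have hbound : ((n:ℝ) - ∑ i, (if 0 ≤ x i then (1:ℝ) else -1) * xstar i) * Sx
      ≤ 4 * δ * (n:ℝ) * Sx := by
    rw [← hsumsub]
    calc (∑ i, (1 - (if 0 ≤ x i then (1:ℝ) else -1) * xstar i)) * Sx
        ≤ 2 * ∑ i, (Real.sqrt n * x i - r * xstar i)^2 := hsum
      _ = 2 * (2*((n:ℝ)*Sx) - 2*(r*Real.sqrt n) * ∑ i, x i * xstar i) := by rw [hexp]
      _ ≤ 4 * δ * (n:ℝ) * Sx := by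
          have h2 : 2*(r*Real.sqrt n)*((1-δ)*(r*Real.sqrt n))
              ≤ 2*(r*Real.sqrt n)*(∑ i, x i * xstar i) :=
            mul_le_mul_of_nonneg_left hc (by positivity)
          have h3 : 2*(r*Real.sqrt n)*((1-δ)*(r*Real.sqrt n)) = 2*(1-δ)*((n:ℝ)*Sx) := by
            linear_combination 2*(1-δ)*hrn2
          linarith
  have hfin : (1 - 4*δ) * (n:ℝ) ≤ ∑ i, (if 0 ≤ x i then (1:ℝ) else -1) * xstar i := by
    nlinarith [hbound, hSx]

  rw [hsgn2, hstarsum, hsn, ge_iff_le, le_div_iff₀ hnR]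
  linarith
end

section
/- Let k ≥ 1 and let Q be a probability distribution on {−1,1}^k (i.e., Q(y) ≥ 0 for all y and Σ_{y∈{−1,1}^k} Q(y) = 1) whose support is a proper subset of {−1,1}^k. Then there exists a nonempty set S ⊆ [k] with |Q̂(S)| > 4^{−k}. -/
open Finset

/-- If `Q` is a probability distribution on `{−1,1}^k` (encoded via `Fin k → Bool`,
with `true ↦ 1` and `false ↦ −1`) whose support is a proper subset of `{−1,1}^k`,
then some nonempty `S ⊆ [k]` has Fourier coefficient `|Q̂(S)| > 4^{−k}`, where
`Q̂(S) = 2^{−k} Σ_y Q(y) ∏_{j∈S} y_j`. -/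
theorem stmt3 (k : ℕ) (hk : 1 ≤ k) (Q : (Fin k → Bool) → ℝ)
    (hQnonneg : ∀ y, 0 ≤ Q y)
    (hQsum : ∑ y : Fin k → Bool, Q y = 1)
    (hsupp : ∃ y : Fin k → Bool, Q y = 0) :
    ∃ S : Finset (Fin k), S.Nonempty ∧
      |(2 : ℝ) ^ (-(k : ℤ)) *
        ∑ y : Fin k → Bool, Q y * ∏ j ∈ S, (if y j then (1 : ℝ) else -1)| >
      (4 : ℝ) ^ (-(k : ℤ)) := by
  by_contra hcon
  push_neg at hcon
  obtain ⟨y₀, hy₀⟩ := hsupp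
  set ε : Bool → ℝ := fun b => if b then (1:ℝ) else -1 with hε
  set F : Finset (Fin k) → ℝ := fun S => ∑ y : Fin k → Bool, Q y * ∏ j ∈ S, ε (y j) with hF
  have h2k : (0:ℝ) < 2 ^ k := by positivity
  -- character orthogonality / inversion
  have key : ∀ y : Fin k → Bool,
      ∑ S : Finset (Fin k), ∏ j ∈ S, (ε (y j) * ε (y₀ j))
        = if y = y₀ then (2:ℝ)^k else 0 := by
    intro y
    have hpa := Finset.prod_add (fun j => ε (y j) * ε (y₀ j)) (fun _ => (1:ℝ)) Finset.univ
    simp only [Finset.prod_const_one, mul_one, Finset.powerset_univ] at hpa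
    rw [← hpa]
    by_cases hy : y = y₀
    · subst hy
      rw [if_pos rfl]
      have : ∀ j : Fin k, ε (y j) * ε (y j) + 1 = 2 := by
        intro j; cases y j <;> simp [hε] <;> norm_num
      rw [Finset.prod_congr rfl (fun j _ => this j), Finset.prod_const]
      simp
    · rw [if_neg hy]
      obtain ⟨j, hj⟩ : ∃ j, y j ≠ y₀ j := by
        by_contra hc; push_neg at hc; exact hy (funext hc)
      apply Finset.prod_eq_zero (Finset.mem_univ j)
      cases hyj : y j <;> cases hy0j : y₀ j <;> rw [hy0j] at hj <;>
        first | (exact absurd hyj hj) | (norm_num [hε])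
  have hinv : ∑ S : Finset (Fin k), F S * ∏ j ∈ S, ε (y₀ j) = 2 ^ k * Q y₀ := by
    have step1 : ∀ S : Finset (Fin k), F S * ∏ j ∈ S, ε (y₀ j)
        = ∑ y : Fin k → Bool, Q y * ∏ j ∈ S, (ε (y j) * ε (y₀ j)) := by
      intro S
      rw [hF, Finset.sum_mul]
      apply Finset.sum_congr rfl
      intro y _
      rw [Finset.prod_mul_distrib]
      ring
    rw [Finset.sum_congr rfl (fun S _ => step1 S), Finset.sum_comm]
    rw [Finset.sum_congr rfl (fun y (_ : y ∈ Finset.univ) => (Finset.mul_sum _ _ _).symm)]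
    rw [Finset.sum_congr rfl (fun y _ => by rw [key y])]
    simp [hy₀]
  -- split off the empty set
  have hsplit : ∑ S : Finset (Fin k), F S * ∏ j ∈ S, ε (y₀ j)
      = F ∅ + ∑ S ∈ Finset.univ.erase ∅, F S * ∏ j ∈ S, ε (y₀ j) := by
    rw [← Finset.add_sum_erase _ _ (Finset.mem_univ ∅)]
    simp
  have hFempty : F ∅ = 1 := by simp [hF, hQsum]
  have hrest : ∑ S ∈ Finset.univ.erase ∅, F S * ∏ j ∈ S, ε (y₀ j) = -1 := by
    have := hinv
    rw [hsplit, hFempty, hy₀] at this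
    linarith
  -- bound each term
  have hbound : ∀ S ∈ Finset.univ.erase (∅ : Finset (Fin k)),
      |F S * ∏ j ∈ S, ε (y₀ j)| ≤ (2:ℝ)^k * (4:ℝ)^(-(k:ℤ)) := by
    intro S hS
    have hSne : S.Nonempty := Finset.nonempty_of_ne_empty (Finset.mem_erase.mp hS).1
    have h1 := hcon S hSne
    have hFS : |F S| ≤ (2:ℝ)^k * (4:ℝ)^(-(k:ℤ)) := by
      have h2 : |(2 : ℝ) ^ (-(k : ℤ))| * |F S| ≤ (4:ℝ)^(-(k:ℤ)) := by
        rw [← abs_mul]; exact h1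
      have h3 : |(2 : ℝ) ^ (-(k : ℤ))| = ((2:ℝ)^k)⁻¹ := by
        rw [abs_of_pos (by positivity), zpow_neg, zpow_natCast]
      rw [h3] at h2
      calc |F S| = (2:ℝ)^k * (((2:ℝ)^k)⁻¹ * |F S|) := by field_simp
        _ ≤ (2:ℝ)^k * (4:ℝ)^(-(k:ℤ)) := by
            apply mul_le_mul_of_nonneg_left h2 (le_of_lt h2k)
    have hchi : |∏ j ∈ S, ε (y₀ j)| = 1 := by
      rw [Finset.abs_prod]
      apply Finset.prod_eq_one
      intro j _; cases y₀ j <;> simp [hε]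
    rw [abs_mul, hchi, mul_one]; exact hFS
  have hcard : (Finset.univ.erase (∅ : Finset (Fin k))).card = 2^k - 1 := by
    rw [Finset.card_erase_of_mem (Finset.mem_univ _)]
    simp [Finset.card_univ]
  have habs : (1:ℝ) ≤ ((2:ℝ)^k - 1) * ((2:ℝ)^k * (4:ℝ)^(-(k:ℤ))) := by
    have h1 : |∑ S ∈ Finset.univ.erase ∅, F S * ∏ j ∈ S, ε (y₀ j)| = 1 := by
      rw [hrest]; norm_num
    have h2 := Finset.abs_sum_le_sum_abs
      (fun S => F S * ∏ j ∈ S, ε (y₀ j)) (Finset.univ.erase ∅)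
    have h3 := Finset.sum_le_card_nsmul _ _ _ hbound
    rw [hcard] at h3
    have h4 : ((2^k - 1 : ℕ) : ℝ) = (2:ℝ)^k - 1 := by
      push_cast [Nat.one_le_two_pow]; ring
    rw [nsmul_eq_mul, h4] at h3
    linarith [h1 ▸ h2]
  -- derive contradiction: RHS < 1
  have h4k : (2:ℝ)^k * (4:ℝ)^(-(k:ℤ)) = ((2:ℝ)^k)⁻¹ := by
    have : (4:ℝ)^(-(k:ℤ)) = ((4:ℝ)^k)⁻¹ := by rw [zpow_neg, zpow_natCast]
    rw [this]
    have : (4:ℝ)^k = (2:ℝ)^k * (2:ℝ)^k := by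
      rw [← mul_pow]; norm_num
    rw [this]
    field_simp
  rw [h4k] at habs
  have : ((2:ℝ)^k - 1) * ((2:ℝ)^k)⁻¹ < 1 := by
    rw [sub_mul, mul_inv_cancel₀ (ne_of_gt h2k)]
    have : (0:ℝ) < ((2:ℝ)^k)⁻¹ := by positivity
    linarith
  linarith
end

section
/- Let k ≥ 2 be an odd integer, let x* ∈ {−1,1}^n, let δ ∈ (0,1), and let Ẽ be a degree-(k+2) pseudo-expectation over the hypercube {−1,1}^n. If Ẽ[⟨x, x*⟩^k] ≥ n^k (1 − δ), then Ẽ[⟨x, x*⟩] ≥ n(1 − 2δ). Here ⟨x, x*⟩ denotes the polynomial Σ_{i=1}^n x_i x*_i in the variables x_1,…,x_n. -/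
open MvPolynomial

/-- A degree-`d` pseudo-expectation over the hypercube `{−1,1}ⁿ`: a linear functional on
real polynomials in `x_1, …, x_n` satisfying (i) `Ẽ[1] = 1`; (ii) `Ẽ[x_i² f] = Ẽ[f]`
for every `f` of degree at most `d − 2`; (iii) `Ẽ[f²] ≥ 0` for every `f` of degree at
most `d/2`. -/
structure PseudoExpectation (n d : ℕ) where
  toFun : MvPolynomial (Fin n) ℝ →ₗ[ℝ] ℝ
  normalized : toFun 1 = 1
  boolean : ∀ (i : Fin n) (f : MvPolynomial (Fin n) ℝ),
      f.totalDegree + 2 ≤ d → toFun (X i ^ 2 * f) = toFun f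
  posSq : ∀ f : MvPolynomial (Fin n) ℝ, 2 * f.totalDegree ≤ d → 0 ≤ toFun (f ^ 2)

/-- For odd `k ≥ 2`, `x* ∈ {−1,1}ⁿ`, `δ ∈ (0,1)`, and a degree-`(k+2)` pseudo-expectation
`Ẽ` over the hypercube: if `Ẽ[⟨x,x*⟩^k] ≥ n^k (1−δ)` then `Ẽ[⟨x,x*⟩] ≥ n(1−2δ)`. -/
theorem stmt4 (n k : ℕ) (hk : 2 ≤ k) (hodd : Odd k)
    (xstar : Fin n → ℝ) (hxstar : ∀ i, xstar i = 1 ∨ xstar i = -1)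
    (δ : ℝ) (hδ : 0 < δ ∧ δ < 1)
    (E : PseudoExpectation n (k + 2))
    (h : E.toFun ((∑ i, C (xstar i) * X i) ^ k) ≥ (n : ℝ) ^ k * (1 - δ)) :
    E.toFun (∑ i, C (xstar i) * X i) ≥ (n : ℝ) * (1 - 2 * δ) := by
  classical
  rcases Nat.eq_zero_or_pos n with hn | hn
  · subst hn
    simp
  obtain ⟨m, hm⟩ := hodd
  have hk2 : k = 2 * m + 1 := by omega
  subst hk2
  set P : MvPolynomial (Fin n) ℝ := ∑ i, C (xstar i) * X i with hP
  have hs2 : ∀ i, (xstar i) ^ 2 = 1 := by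
    intro i; rcases hxstar i with hh | hh <;> rw [hh] <;> norm_num
  have hEC : ∀ c : ℝ, E.toFun (C c) = c := by
    intro c
    have hc : (C c : MvPolynomial (Fin n) ℝ) = c • 1 := by
      rw [smul_eq_C_mul, mul_one]
    rw [hc, map_smul, E.normalized, smul_eq_mul, mul_one]
  have hPdeg : P.totalDegree ≤ 1 := by
    refine (totalDegree_finset_sum _ _).trans (Finset.sup_le fun i _ => ?_)
    refine (totalDegree_mul _ _).trans ?_
    simp [totalDegree_C, totalDegree_X]
  have hEQ : E.toFun (C ((n:ℝ)) - P) = (n:ℝ) - E.toFun P := by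
    rw [map_sub, hEC]
  -- main SOS lemma
  have lemA : ∀ g : MvPolynomial (Fin n) ℝ, g.totalDegree ≤ m →
      0 ≤ E.toFun ((C ((n:ℝ)) - P) * g ^ 2) := by
    intro g hg
    have hbool : ∀ j : Fin n, E.toFun (X j ^ 2 * g ^ 2) = E.toFun (g ^ 2) := by
      intro j
      refine E.boolean j _ ?_
      have h1 : (g ^ 2).totalDegree ≤ 2 * m := by
        refine (totalDegree_pow _ _).trans ?_
        omega
      omega
    have hX1 : ∀ j : Fin n, (X j - C (xstar j) : MvPolynomial (Fin n) ℝ).totalDegree ≤ 1 := by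
      intro j
      rw [sub_eq_add_neg]
      refine (totalDegree_add _ _).trans ?_
      simp [totalDegree_X, totalDegree_C]
    have hid : ∀ j : Fin n, ((X j - C (xstar j)) * g) ^ 2
        = X j ^ 2 * g ^ 2 + g ^ 2 - (2 * xstar j) • (X j * g ^ 2) := by
      intro j
      have h1 : (C (xstar j) : MvPolynomial (Fin n) ℝ) ^ 2 = 1 := by
        rw [← map_pow, hs2, map_one]
      rw [smul_eq_C_mul]
      have h2 : (C (2 * xstar j) : MvPolynomial (Fin n) ℝ) = 2 * C (xstar j) := by
        rw [map_mul, map_ofNat]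
      rw [h2]
      linear_combination g ^ 2 * h1
    have hterm : ∀ j : Fin n, E.toFun (((X j - C (xstar j)) * g) ^ 2)
        = 2 * E.toFun (g ^ 2) - 2 * (xstar j * E.toFun (X j * g ^ 2)) := by
      intro j
      rw [hid j, map_sub, map_add, map_smul, hbool j, smul_eq_mul]; ring
    have hPg : E.toFun (P * g ^ 2) = ∑ j, xstar j * E.toFun (X j * g ^ 2) := by
      rw [hP, Finset.sum_mul, map_sum]
      refine Finset.sum_congr rfl fun j _ => ?_
      rw [mul_assoc, ← smul_eq_C_mul, map_smul, smul_eq_mul]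
    have hCN : E.toFun ((C ((n:ℝ)) - P) * g ^ 2)
        = (n:ℝ) * E.toFun (g ^ 2) - E.toFun (P * g ^ 2) := by
      rw [sub_mul, map_sub, ← smul_eq_C_mul, map_smul, smul_eq_mul]
    have hsum : ∑ j : Fin n, E.toFun (((X j - C (xstar j)) * g) ^ 2)
        = 2 * E.toFun ((C ((n:ℝ)) - P) * g ^ 2) := by
      simp only [hterm]
      rw [Finset.sum_sub_distrib, Finset.sum_const, Finset.card_univ, Fintype.card_fin,
        nsmul_eq_mul, hCN, hPg, ← Finset.mul_sum]
      ring
    have hpos : 0 ≤ ∑ j : Fin n, E.toFun (((X j - C (xstar j)) * g) ^ 2) := by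
      refine Finset.sum_nonneg fun j _ => ?_
      refine E.posSq _ ?_
      have hd : ((X j - C (xstar j)) * g).totalDegree ≤ 1 + m :=
        (totalDegree_mul _ _).trans (add_le_add (hX1 j) hg)
      omega
    linarith [hsum ▸ hpos]
  -- induction
  have key : ∀ j : ℕ, j ≤ m →
      ((n:ℝ)) ^ (2*j) * E.toFun (C ((n:ℝ)) - P) + E.toFun ((C ((n:ℝ)) - P) * (P ^ j) ^ 2)
        ≤ 2 * (((n:ℝ)) ^ (2*j+1) - E.toFun (P ^ (2*j+1))) := by
    intro j
    induction j with
    | zero =>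
      intro _
      simp only [Nat.mul_zero, Nat.zero_add, pow_zero, one_mul, pow_one, one_pow, mul_one]
      rw [hEQ]
      linarith
    | succ j ih =>
      intro hle
      have IH := ih (by omega)
      have id1 : (C ((n:ℝ)) - P) * ((C ((n:ℝ)) + P) * P ^ j) ^ 2
            + (C ((n:ℝ)) - P) * (P ^ (j+1)) ^ 2
          = ((n:ℝ)^2) • ((C ((n:ℝ)) - P) * (P ^ j) ^ 2)
            + (2*(n:ℝ)^2) • P ^ (2*j+1) - (2:ℝ) • P ^ (2*j+3) := by
        simp only [smul_eq_C_mul, map_mul, map_pow, map_ofNat]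
        ring
      have hEid := congrArg E.toFun id1
      simp only [map_add, map_sub, map_smul, smul_eq_mul] at hEid
      have ha : 0 ≤ E.toFun ((C ((n:ℝ)) - P) * ((C ((n:ℝ)) + P) * P ^ j) ^ 2) := by
        refine lemA _ ?_
        have h1 : (C ((n:ℝ)) + P : MvPolynomial (Fin n) ℝ).totalDegree ≤ 1 := by
          refine (totalDegree_add _ _).trans (max_le ?_ hPdeg)
          rw [totalDegree_C]
          omega
        have h2 : (P ^ j).totalDegree ≤ j := by
          refine (totalDegree_pow _ _).trans ?_
          calc j * P.totalDegree ≤ j * 1 := Nat.mul_le_mul_left _ hPdeg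
          _ = j := by omega
        refine (totalDegree_mul _ _).trans ?_
        omega
      have hb : 0 ≤ E.toFun ((C ((n:ℝ)) - P) * (P ^ (j+1)) ^ 2) := by
        refine lemA _ ?_
        refine (totalDegree_pow _ _).trans ?_
        calc (j+1) * P.totalDegree ≤ (j+1) * 1 := Nat.mul_le_mul_left _ hPdeg
        _ ≤ m := by omega
      have en1 : 2 * (j+1) = 2*j+2 := by ring
      have en2 : 2 * (j+1) + 1 = 2*j+3 := by ring
      rw [en2, en1]
      have er1 : ((n:ℝ)) ^ (2*j+2) = (n:ℝ)^2 * (n:ℝ)^(2*j) := by ring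
      have er2 : ((n:ℝ)) ^ (2*j+3) = (n:ℝ)^2 * (n:ℝ)^(2*j+1) := by ring
      have IH2 := mul_le_mul_of_nonneg_left IH (sq_nonneg ((n:ℝ)))
      rw [er1, er2]
      nlinarith [IH2, hEid, ha, hb]
  -- conclude
  have hkey := key m le_rfl
  have hT : 0 ≤ E.toFun ((C ((n:ℝ)) - P) * (P ^ m) ^ 2) := by
    refine lemA _ ?_
    refine (totalDegree_pow _ _).trans ?_
    calc m * P.totalDegree ≤ m * 1 := Nat.mul_le_mul_left _ hPdeg
    _ = m := by omega
  rw [hEQ] at hkey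
  have hNpos : (0:ℝ) < (n:ℝ) := by exact_mod_cast hn
  have hA : (0:ℝ) < (n:ℝ) ^ (2*m) := pow_pos hNpos _
  have er : ((n:ℝ)) ^ (2*m+1) = (n:ℝ)^(2*m) * (n:ℝ) := by ring
  rw [er] at hkey h
  have h3 : (n:ℝ)^(2*m) * ((n:ℝ) - E.toFun P) ≤ (n:ℝ)^(2*m) * (2*δ*(n:ℝ)) := by
    nlinarith [hkey, hT, h]
  have h4 : (n:ℝ) - E.toFun P ≤ 2*δ*(n:ℝ) := le_of_mul_le_mul_left h3 hA
  nlinarith [h4]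
end

section
/- Let k ≥ 2 be an even integer, let x* ∈ {−1,1}^n, let δ ∈ (0,1), and let Ẽ be a degree-(k+2) pseudo-expectation over the hypercube {−1,1}^n. If Ẽ[⟨x, x*⟩^k] ≥ n^k (1 − δ), then Ẽ[⟨x, x*⟩²] ≥ n² (1 − 2δ). Here ⟨x, x*⟩ denotes the polynomial Σ_{i=1}^n x_i x*_i in the variables x_1,…,x_n. -/
open MvPolynomial

lemma sum_sub_sq_id {n : ℕ} (a : Fin n → MvPolynomial (Fin n) ℝ) :
    ∑ i, ∑ j, (a i - a j)^2
      = (2*(n:ℝ)) • (∑ i, (a i)^2) - (2:ℝ) • (∑ i, a i)^2 := by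
  simp only [sub_sq, Finset.sum_add_distrib, Finset.sum_sub_distrib, Finset.sum_const,
    Finset.card_univ, Fintype.card_fin, ← Finset.mul_sum, ← Finset.sum_mul, Finset.sum_smul,
    smul_eq_C_mul, C_mul, C_eq_coe_nat, map_ofNat]
  rw [sq (∑ i, a i)]
  simp only [nsmul_eq_mul, ← Finset.mul_sum]
  ring

/-- For even `k ≥ 2`, `x* ∈ {−1,1}ⁿ`, `δ ∈ (0,1)`, and a degree-`(k+2)` pseudo-expectation
`Ẽ` over the hypercube: if `Ẽ[⟨x,x*⟩^k] ≥ n^k (1−δ)` then `Ẽ[⟨x,x*⟩²] ≥ n²(1−2δ)`. -/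
theorem stmt5 (n k : ℕ) (hk : 2 ≤ k) (heven : Even k)
    (xstar : Fin n → ℝ) (hxstar : ∀ i, xstar i = 1 ∨ xstar i = -1)
    (δ : ℝ) (hδ : 0 < δ ∧ δ < 1)
    (E : PseudoExpectation n (k + 2))
    (h : E.toFun ((∑ i, C (xstar i) * X i) ^ k) ≥ (n : ℝ) ^ k * (1 - δ)) :
    E.toFun ((∑ i, C (xstar i) * X i) ^ 2) ≥ (n : ℝ) ^ 2 * (1 - 2 * δ) := by
  set a : Fin n → MvPolynomial (Fin n) ℝ := fun i => C (xstar i) * X i with ha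
  set p : MvPolynomial (Fin n) ℝ := ∑ i, a i with hp
  have hdega : ∀ i, (a i).totalDegree ≤ 1 := by
    intro i
    refine (totalDegree_mul _ _).trans ?_
    simp [totalDegree_X]
  have hdegp : p.totalDegree ≤ 1 :=
    totalDegree_finsetSum_le fun i _ => hdega i
  have hdegpow : ∀ s : ℕ, (p ^ s).totalDegree ≤ s := fun s =>
    (totalDegree_pow _ _).trans (by nlinarith [hdegp])
  have hai2 : ∀ i, (a i)^2 = X i ^ 2 := by
    intro i
    rcases hxstar i with hh | hh <;> rw [ha] <;> rw [mul_pow, ← map_pow, hh] <;> norm_num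
  -- key step
  have key : ∀ t : ℕ, 2*t + 2 ≤ k →
      E.toFun (p^(2*t+2)) ≤ (n:ℝ)^2 * E.toFun (p^(2*t)) := by
    intro t ht
    have hid : ∑ i, ∑ j, ((a i - a j) * p^t)^2
        = (2*(n:ℝ)) • (∑ i, X i^2 * p^(2*t)) - (2:ℝ) • p^(2*t+2) := by
      have e1 : ∑ i, ∑ j, ((a i - a j) * p^t)^2
          = (∑ i, ∑ j, (a i - a j)^2) * (p^t)^2 := by
        simp only [Finset.sum_mul, mul_pow]
      rw [e1, sum_sub_sq_id, sub_mul, smul_mul_assoc, smul_mul_assoc, Finset.sum_mul]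
      refine congrArg₂ (· - ·) ?_ ?_
      · refine congrArg _ ?_
        refine Finset.sum_congr rfl fun i _ => ?_
        rw [hai2]
        ring
      · refine congrArg _ ?_
        ring
    have hpos : 0 ≤ E.toFun (∑ i, ∑ j, ((a i - a j) * p^t)^2) := by
      rw [map_sum]
      refine Finset.sum_nonneg fun i _ => ?_
      rw [map_sum]
      refine Finset.sum_nonneg fun j _ => ?_
      refine E.posSq _ ?_
      have hd : ((a i - a j) * p^t).totalDegree ≤ 1 + t := by
        refine (totalDegree_mul _ _).trans (add_le_add ?_ ?_)
        · exact (totalDegree_sub _ _).trans (max_le (hdega i) (hdega j))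
        · exact (totalDegree_pow _ _).trans (by nlinarith [hdegp])
      omega
    rw [hid, LinearMap.map_sub, LinearMap.map_smul, LinearMap.map_smul, map_sum] at hpos
    have hbool : ∀ i : Fin n, E.toFun (X i^2 * p^(2*t)) = E.toFun (p^(2*t)) := by
      intro i
      refine E.boolean i _ ?_
      have := hdegpow (2*t)
      omega
    simp only [hbool, Finset.sum_const, Finset.card_univ, Fintype.card_fin, smul_eq_mul,
      nsmul_eq_mul] at hpos
    nlinarith [hpos]
  -- n = 0 case
  rcases Nat.eq_zero_or_pos n with hn | hn
  · subst hn
    have : p = 0 := by simp [hp]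
    simp [this, zero_pow, map_zero]
  -- induction
  obtain ⟨m, hm⟩ := heven
  have hm' : k = 2 * m := by omega
  have hm1 : 1 ≤ m := by omega
  have claim : ∀ t : ℕ, 2*(t+1) ≤ k →
      E.toFun (p^(2*(t+1))) ≤ (n:ℝ)^(2*t) * E.toFun (p^2) := by
    intro t
    induction t with
    | zero => intro _; simp
    | succ s ih =>
      intro hts
      have h1 : E.toFun (p^(2*(s+1)+2)) ≤ (n:ℝ)^2 * E.toFun (p^(2*(s+1))) :=
        key (s+1) (by omega)
      have h2 : (n:ℝ)^2 * E.toFun (p^(2*(s+1))) ≤ (n:ℝ)^2 * ((n:ℝ)^(2*s) * E.toFun (p^2)) := by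
        refine mul_le_mul_of_nonneg_left (ih (by omega)) (by positivity)
      calc E.toFun (p^(2*(s+2))) = E.toFun (p^(2*(s+1)+2)) := by ring_nf
        _ ≤ (n:ℝ)^2 * E.toFun (p^(2*(s+1))) := h1
        _ ≤ (n:ℝ)^2 * ((n:ℝ)^(2*s) * E.toFun (p^2)) := h2
        _ = (n:ℝ)^(2*(s+1)) * E.toFun (p^2) := by ring
  have hmain : E.toFun (p^k) ≤ (n:ℝ)^(k-2) * E.toFun (p^2) := by
    have := claim (m-1) (by omega)
    have e2 : 2*(m-1+1) = k := by omega
    have e3 : 2*(m-1) = k - 2 := by omega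
    rwa [e2, e3] at this
  have hnpos : (0:ℝ) < (n:ℝ)^(k-2) := by positivity
  have h4 : (n:ℝ)^(k-2) * ((n:ℝ)^2 * (1-δ)) ≤ (n:ℝ)^(k-2) * E.toFun (p^2) := by
    have e4 : (n:ℝ)^(k-2) * (n:ℝ)^2 = (n:ℝ)^k := by
      rw [← pow_add]; congr 1; omega
    calc (n:ℝ)^(k-2) * ((n:ℝ)^2 * (1-δ)) = (n:ℝ)^k * (1-δ) := by rw [← mul_assoc, e4]
      _ ≤ E.toFun (p^k) := h
      _ ≤ (n:ℝ)^(k-2) * E.toFun (p^2) := hmain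
  have h5 : (n:ℝ)^2 * (1-δ) ≤ E.toFun (p^2) := le_of_mul_le_mul_left h4 hnpos
  have hn2 : (0:ℝ) ≤ (n:ℝ)^2 := by positivity
  nlinarith [hδ.1, hδ.2]
end
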